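/- Let Ric be a symmetric bilinear form on an n-dimensional inner product space (n ≥ 3) with trace s > 0, and let R̄ = Ric - (s/n)g be its traceless part. Then (1/(n-1)) s ‖R̄‖² + (n/(n-2)) trace(R̄³) ≥ (1/(n-1)) ‖R̄‖² (s - √(n(n-1)) ‖R̄‖), where trace(R̄³) denotes the trace of the cube of the associated endomorphism. -/

import Mathlib

open Matrix


private lemma conj_trace {n : ℕ} (U X : Matrix (Fin n) (Fin n) ℝ) (h : star U * U = 1) :
    (U * X * star U).trace = X.trace := by
  rw [trace_mul_cycle, h, Matrix.one_mul]

private lemma okumura {n : ℕ} (hn : 3 ≤ n) (a : Fin n → ℝ) (ha : ∑ i, a i = 0) :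
    Real.sqrt ((n : ℝ) * ((n : ℝ) - 1)) * (∑ i, a i ^ 3)
      ≥ -(((n : ℝ) - 2)) * (∑ i, a i ^ 2) * Real.sqrt (∑ i, a i ^ 2) := by
  have hn3 : (3 : ℝ) ≤ (n : ℝ) := by exact_mod_cast hn
  set t : ℝ := ∑ i, a i ^ 2 with ht_def
  have ht : 0 ≤ t := Finset.sum_nonneg fun i _ => sq_nonneg _
  set w : ℝ := Real.sqrt ((n : ℝ) * ((n : ℝ) - 1)) with hw_def
  have hwpos : 0 < w := Real.sqrt_pos.2 (by nlinarith)
  have hw2 : w ^ 2 = (n : ℝ) * ((n : ℝ) - 1) := Real.sq_sqrt (by nlinarith)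
  set r : ℝ := Real.sqrt t with hr_def
  have hr : 0 ≤ r := Real.sqrt_nonneg _
  have hr2 : r ^ 2 = t := Real.sq_sqrt ht
  set c : ℝ := r / w with hc_def
  have hc : 0 ≤ c := div_nonneg hr hwpos.le
  have hwc : w * c = r := by rw [hc_def, mul_comm, div_mul_cancel₀ _ hwpos.ne']
  have hc2 : (n : ℝ) * ((n : ℝ) - 1) * c ^ 2 = t := by
    rw [← hw2, hc_def]; field_simp; exact hr2
  -- lower bound on each a i
  have hlow : ∀ i, -(((n : ℝ) - 1) * c) ≤ a i := by
    intro i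
    have h1 : (∑ j ∈ Finset.univ.erase i, a j) = -a i := by
      rw [Finset.sum_erase_eq_sub (Finset.mem_univ i), ha]; ring
    have h2 : (∑ j ∈ Finset.univ.erase i, a j) ^ 2
        ≤ (Finset.univ.erase i).card * ∑ j ∈ Finset.univ.erase i, a j ^ 2 :=
      sq_sum_le_card_mul_sum_sq
    have hcard : ((Finset.univ.erase i).card : ℝ) = (n : ℝ) - 1 := by
      have h1n : 1 ≤ n := by omega
      rw [Finset.card_erase_of_mem (Finset.mem_univ i), Finset.card_univ, Fintype.card_fin,
        Nat.cast_sub h1n, Nat.cast_one]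
    have h3 : (∑ j ∈ Finset.univ.erase i, a j ^ 2) = t - a i ^ 2 := by
      rw [Finset.sum_erase_eq_sub (Finset.mem_univ i), ht_def]
    rw [h1, hcard, h3] at h2
    -- (n) * a i ^2 ≤ (n-1) * t
    have h4 : (n : ℝ) * a i ^ 2 ≤ ((n : ℝ) - 1) * t := by nlinarith
    have h5 : a i ^ 2 ≤ (((n : ℝ) - 1) * c) ^ 2 := by nlinarith
    nlinarith [sq_nonneg (a i + ((n:ℝ)-1)*c), mul_nonneg (sub_nonneg.2 (by linarith : (1:ℝ) ≤ (n:ℝ))) hc]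
  -- SOS step
  have hsos : 0 ≤ ∑ i, (a i - c) ^ 2 * (a i + ((n : ℝ) - 1) * c) :=
    Finset.sum_nonneg fun i _ => mul_nonneg (sq_nonneg _) (by linarith [hlow i])
  have hexp : ∑ i, (a i - c) ^ 2 * (a i + ((n : ℝ) - 1) * c)
      = (∑ i, a i ^ 3) + ((n : ℝ) - 3) * c * t - (2 * (n : ℝ) - 3) * c ^ 2 * (∑ i, a i)
        + (n : ℝ) * (((n : ℝ) - 1) * c ^ 3) := by
    have key : ∀ x : ℝ, (x - c) ^ 2 * (x + ((n : ℝ) - 1) * c)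
        = x ^ 3 + ((n : ℝ) - 3) * c * x ^ 2 - (2 * (n : ℝ) - 3) * c ^ 2 * x
          + ((n : ℝ) - 1) * c ^ 3 := fun x => by ring
    rw [Finset.sum_congr rfl fun i _ => key (a i)]
    rw [Finset.sum_add_distrib, Finset.sum_sub_distrib, Finset.sum_add_distrib,
      ← Finset.mul_sum, ← Finset.mul_sum, Finset.sum_const, Finset.card_univ, Fintype.card_fin,
      ht_def, nsmul_eq_mul]
  rw [hexp, ha] at hsos
  -- n(n-1)c³ = c * t
  have hct : (n : ℝ) * (((n : ℝ) - 1) * c ^ 3) = c * t := by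
    have : (n : ℝ) * (((n : ℝ) - 1) * c ^ 3) = ((n : ℝ) * ((n : ℝ) - 1) * c ^ 2) * c := by ring
    rw [this, hc2]; ring
  have hsum : (∑ i, a i ^ 3) ≥ -(((n : ℝ) - 2) * c * t) := by nlinarith
  -- multiply by w
  have hmul := mul_le_mul_of_nonneg_left hsum hwpos.le
  calc w * (∑ i, a i ^ 3) ≥ w * (-(((n : ℝ) - 2) * c * t)) := hmul
    _ = -(((n : ℝ) - 2)) * t * (w * c) := by ring
    _ = -(((n : ℝ) - 2)) * t * r := by rw [hwc]

private lemma trace_pows {n : ℕ} {A : Matrix (Fin n) (Fin n) ℝ} (hA : A.IsHermitian) :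
    A.trace = ∑ i, hA.eigenvalues i ∧
    (A * A).trace = ∑ i, hA.eigenvalues i ^ 2 ∧
    (A * A * A).trace = ∑ i, hA.eigenvalues i ^ 3 := by
  set U : Matrix (Fin n) (Fin n) ℝ := (hA.eigenvectorUnitary : Matrix (Fin n) (Fin n) ℝ) with hU
  set D : Matrix (Fin n) (Fin n) ℝ := diagonal (RCLike.ofReal ∘ hA.eigenvalues) with hD
  have hsu : star U * U = 1 := hA.eigenvectorUnitary.2.1
  have hAe : A = U * D * star U := hA.spectral_theorem
  have h2 : A * A = U * (D * D) * star U := by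
    conv_lhs => rw [hAe]
    simp only [Matrix.mul_assoc]
    rw [← Matrix.mul_assoc (star U) U, hsu, Matrix.one_mul]
  have h3 : A * A * A = U * (D * D * D) * star U := by
    rw [h2, hAe]
    simp only [Matrix.mul_assoc]
    rw [← Matrix.mul_assoc (star U) U, hsu, Matrix.one_mul]
  refine ⟨?_, ?_, ?_⟩
  · conv_lhs => rw [hAe]
    rw [conj_trace _ _ hsu, hD, trace_diagonal]
    simp [Function.comp]
  · rw [h2, conj_trace _ _ hsu, hD, diagonal_mul_diagonal, trace_diagonal]
    simp [Function.comp, pow_two]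
  · rw [h3, conj_trace _ _ hsu, hD, diagonal_mul_diagonal, diagonal_mul_diagonal, trace_diagonal]
    simp [Function.comp, pow_succ, pow_two]


/-- pointwise linear-algebra inequality, estimate (3.7) of the paper.
`Ric` is a symmetric bilinear form on an `n`-dimensional inner product space (`n ≥ 3`),
represented by a symmetric matrix in an orthonormal basis, with trace `s > 0`; `R̄ = Ric − (s/n)g`
is its traceless part. Then
`(1/(n-1)) s ‖R̄‖² + (n/(n-2)) trace(R̄³) ≥ (1/(n-1)) ‖R̄‖² (s − √(n(n-1)) ‖R̄‖)`. -/
theorem traceless_ricci_cubic_estimate (n : ℕ) (hn : 3 ≤ n)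
    (Ric : Matrix (Fin n) (Fin n) ℝ) (hRic : Ric.IsSymm) (hs : 0 < Ric.trace) :
    (1 / ((n : ℝ) - 1)) * Ric.trace *
        (Real.sqrt (((Ric - (Ric.trace / n) • 1) * (Ric - (Ric.trace / n) • 1)).trace)) ^ 2
      + ((n : ℝ) / ((n : ℝ) - 2)) *
        ((Ric - (Ric.trace / n) • 1) * (Ric - (Ric.trace / n) • 1) *
          (Ric - (Ric.trace / n) • 1)).trace
    ≥ (1 / ((n : ℝ) - 1)) *
        (Real.sqrt (((Ric - (Ric.trace / n) • 1) * (Ric - (Ric.trace / n) • 1)).trace)) ^ 2 *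
        (Ric.trace - Real.sqrt ((n : ℝ) * ((n : ℝ) - 1)) *
          Real.sqrt (((Ric - (Ric.trace / n) • 1) * (Ric - (Ric.trace / n) • 1)).trace)) := by
  have hn3 : (3 : ℝ) ≤ (n : ℝ) := by exact_mod_cast hn
  have hn0 : (n : ℝ) ≠ 0 := by positivity
  set R : Matrix (Fin n) (Fin n) ℝ := Ric - (Ric.trace / n) • 1 with hRdef
  have hR : R.IsHermitian := by
    rw [Matrix.IsHermitian, conjTranspose_eq_transpose_of_trivial, hRdef, transpose_sub,
      transpose_smul, transpose_one, hRic]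
  have htr : R.trace = 0 := by
    rw [hRdef, trace_sub, trace_smul, trace_one, Fintype.card_fin, smul_eq_mul]
    field_simp
    ring
  obtain ⟨e1, e2, e3⟩ := trace_pows hR
  have hsum0 : ∑ i, hR.eigenvalues i = 0 := by rw [← e1, htr]
  have ht0 : 0 ≤ (R * R).trace := by
    rw [e2]; exact Finset.sum_nonneg fun i _ => sq_nonneg _
  set t : ℝ := (R * R).trace with htdef
  set c3 : ℝ := (R * R * R).trace with hc3def
  set w : ℝ := Real.sqrt ((n : ℝ) * ((n : ℝ) - 1)) with hwdef
  have ok : w * c3 ≥ -(((n : ℝ) - 2)) * t * Real.sqrt t := by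
    have := okumura hn hR.eigenvalues hsum0
    rw [← e3, ← e2] at this
    exact this
  have hsq : Real.sqrt t ^ 2 = t := Real.sq_sqrt ht0
  rw [hsq]
  have hrt : 0 ≤ Real.sqrt t := Real.sqrt_nonneg _
  have hn1 : (0 : ℝ) < (n : ℝ) - 1 := by linarith
  have hn2 : (0 : ℝ) < (n : ℝ) - 2 := by linarith
  have hwpos : 0 < w := Real.sqrt_pos.2 (by nlinarith)
  have hw2 : w ^ 2 = (n : ℝ) * ((n : ℝ) - 1) := Real.sq_sqrt (by nlinarith)
  have key : 0 ≤ (n : ℝ) * ((n : ℝ) - 1) * c3 + ((n : ℝ) - 2) * w * (t * Real.sqrt t) := by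
    have h' := mul_le_mul_of_nonneg_left ok hwpos.le
    have heq : (n : ℝ) * ((n : ℝ) - 1) * c3 + ((n : ℝ) - 2) * w * (t * Real.sqrt t)
        = w * (w * c3) - w * (-(((n : ℝ) - 2)) * t * Real.sqrt t) := by rw [← hw2]; ring
    rw [heq]; linarith
  have expand : (1 / ((n : ℝ) - 1)) * Ric.trace * t + ((n : ℝ) / ((n : ℝ) - 2)) * c3
      - (1 / ((n : ℝ) - 1)) * t * (Ric.trace - w * Real.sqrt t)
      = ((n : ℝ) * ((n : ℝ) - 1) * c3 + ((n : ℝ) - 2) * w * (t * Real.sqrt t))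
        / (((n : ℝ) - 1) * ((n : ℝ) - 2)) := by
    field_simp
    ring
  have hq : 0 ≤ ((n : ℝ) * ((n : ℝ) - 1) * c3 + ((n : ℝ) - 2) * w * (t * Real.sqrt t))
      / (((n : ℝ) - 1) * ((n : ℝ) - 2)) := div_nonneg key (by positivity)
  linarith [expand ▸ hq]
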